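/- Let ε > 0 and let η : ℝ × [t₁, t₂] → ℝ be such that for each t the map x ↦ η(x,t) is a Schwartz function on ℝ, the map t ↦ η(·,t) is continuously differentiable as a curve in the Schwartz space, and η satisfies the KdV equation ∂_t η + ∂_x η + (3/2) ε η ∂_x η + (1/6) ε ∂_x³ η = 0 at every point. Then ∫_ℝ η(x, t₁)² dx = ∫_ℝ η(x, t₂)² dx. -/

import Mathlib

open MeasureTheory SchwartzMap
open scoped BoundedContinuousFunction

private lemma schwartz_decay_aux (f : SchwartzMap ℝ ℝ) (x : ℝ) :
    ‖f x‖ ≤ (SchwartzMap.seminorm ℝ 0 0 f + SchwartzMap.seminorm ℝ 2 0 f) * (1 + x ^ 2)⁻¹ := by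
  have h0 := SchwartzMap.norm_le_seminorm ℝ f x
  have h2 := SchwartzMap.norm_pow_mul_le_seminorm ℝ f 2 x
  rw [Real.norm_eq_abs, sq_abs] at h2
  have hx : (0 : ℝ) < 1 + x ^ 2 := by positivity
  rw [show (SchwartzMap.seminorm ℝ 0 0 f + SchwartzMap.seminorm ℝ 2 0 f) * (1 + x ^ 2)⁻¹
      = (SchwartzMap.seminorm ℝ 0 0 f + SchwartzMap.seminorm ℝ 2 0 f) / (1 + x ^ 2) by ring,
    le_div_iff₀ hx]
  nlinarith [norm_nonneg (f x)]

private lemma schwartz_mul_integrable (f g : SchwartzMap ℝ ℝ) :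
    Integrable (fun x => f x * g x) :=
  g.integrable.bdd_mul f.continuous.aestronglyMeasurable
    (Filter.Eventually.of_forall fun x => SchwartzMap.norm_le_seminorm ℝ f x)

private lemma kdv_flux_integral_zero (ε : ℝ) (g w : SchwartzMap ℝ ℝ)
    (hKdV : ∀ x : ℝ, w x + deriv (fun y => g y) x + (3/2) * ε * g x * deriv (fun y => g y) x
      + (1/6) * ε * deriv^[3] (fun y => g y) x = 0) :
    ∫ x : ℝ, 2 * g x * w x = 0 := by
  set g1 := SchwartzMap.derivCLM ℝ ℝ g with hg1
  set g2 := SchwartzMap.derivCLM ℝ ℝ g1 with hg2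
  set g3 := SchwartzMap.derivCLM ℝ ℝ g2 with hg3
  have hd : ∀ (u : SchwartzMap ℝ ℝ) (x : ℝ),
      HasDerivAt (fun y => u y) (SchwartzMap.derivCLM ℝ ℝ u x) x := by
    intro u x
    simpa [SchwartzMap.derivCLM_apply] using u.differentiableAt.hasDerivAt
  have e1 : deriv (fun y => g y) = fun x => g1 x := by
    funext x
    exact (SchwartzMap.derivCLM_apply (𝕜 := ℝ) g x).symm
  have e2 : deriv (fun y => g1 y) = fun x => g2 x := by
    funext x
    exact (SchwartzMap.derivCLM_apply (𝕜 := ℝ) g1 x).symm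
  have e3 : deriv (fun y => g2 y) = fun x => g3 x := by
    funext x
    exact (SchwartzMap.derivCLM_apply (𝕜 := ℝ) g2 x).symm
  have hit : deriv^[3] (fun y => g y) = fun x => g3 x := by
    rw [show (3 : ℕ) = 2 + 1 from rfl, Function.iterate_succ_apply',
      show (2 : ℕ) = 1 + 1 from rfl, Function.iterate_succ_apply', Function.iterate_one,
      e1, e2, e3]
  have hKdV' : ∀ x : ℝ, w x + g1 x + (3/2) * ε * g x * g1 x + (1/6) * ε * g3 x = 0 := by
    intro x
    have hk := hKdV x
    rw [e1, hit] at hk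
    exact hk
  set G : ℝ → ℝ := fun x =>
    g x * g x + ε * (g x * g x * g x) + (ε/3) * (g x * g2 x) - (ε/6) * (g1 x * g1 x) with hG
  have hGderiv : ∀ x : ℝ, HasDerivAt G (-(2 * (g x * w x))) x := by
    intro x
    have h0 := hd g x
    have h1 := hd g1 x
    have h2 := hd g2 x
    rw [← hg1] at h0
    rw [← hg2] at h1
    rw [← hg3] at h2
    have H := (((h0.mul h0).add (((h0.mul h0).mul h0).const_mul ε)).add
      ((h0.mul h2).const_mul (ε/3))).sub ((h1.mul h1).const_mul (ε/6))
    refine H.congr_deriv ?_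
    simp only [Pi.mul_apply]
    have hk := hKdV' x
    linear_combination (2 * g x) * hk
  have htriple : Integrable (fun x => g x * g x * g x) := by
    refine g.integrable.bdd_mul ((g.continuous.mul g.continuous).aestronglyMeasurable)
      (c := SchwartzMap.seminorm ℝ 0 0 g * SchwartzMap.seminorm ℝ 0 0 g) (Filter.Eventually.of_forall fun x => ?_)
    rw [norm_mul]
    exact mul_le_mul (SchwartzMap.norm_le_seminorm ℝ g x) (SchwartzMap.norm_le_seminorm ℝ g x)
      (norm_nonneg _) (apply_nonneg _ _)
  have hGint : Integrable G :=
    (((schwartz_mul_integrable g g).add (htriple.const_mul ε)).add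
      ((schwartz_mul_integrable g g2).const_mul (ε/3))).sub
      ((schwartz_mul_integrable g1 g1).const_mul (ε/6))
  have hf'int : Integrable (fun x => -(2 * (g x * w x))) :=
    ((schwartz_mul_integrable g w).const_mul 2).neg
  have h0 := integral_eq_zero_of_hasDerivAt_of_integrable hGderiv hf'int hGint
  rw [integral_neg, neg_eq_zero] at h0
  calc ∫ x : ℝ, 2 * g x * w x = ∫ x : ℝ, 2 * (g x * w x) := by
        congr 1; funext x; ring
    _ = 0 := h0

set_option maxHeartbeats 2000000 in
/-- Conservation of the second classical invariant `∫ η² dx` for Schwartz-class solutions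
of the KdV equation on a time interval `[t₁, t₂]`.  The solution is given as a curve
`η : ℝ → 𝓢(ℝ, ℝ)` in Schwartz space which is continuously differentiable in time: its
pointwise time derivative `ηt t` is again a Schwartz function for each `t ∈ [t₁, t₂]`,
and `t ↦ ηt t` is continuous into Schwartz space. -/
theorem kdv_L2_invariant_conserved (ε t₁ t₂ : ℝ) (hε : 0 < ε) (ht : t₁ ≤ t₂)
    (η : ℝ → SchwartzMap ℝ ℝ) (ηt : ℝ → SchwartzMap ℝ ℝ)
    (hderiv : ∀ t ∈ Set.Icc t₁ t₂, ∀ x : ℝ, HasDerivAt (fun s => η s x) (ηt t x) t)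
    (hcont : ContinuousOn ηt (Set.Icc t₁ t₂))
    (hKdV : ∀ t ∈ Set.Icc t₁ t₂, ∀ x : ℝ,
      ηt t x + deriv (fun y => η t y) x
        + (3/2) * ε * η t x * deriv (fun y => η t y) x
        + (1/6) * ε * deriv^[3] (fun y => η t y) x = 0) :
    ∫ x : ℝ, (η t₁ x)^2 = ∫ x : ℝ, (η t₂ x)^2 := by
  classical
  -- the clamp map onto `[t₁, t₂]`
  set c : ℝ → ℝ := fun s => max t₁ (min s t₂) with hc
  have hc_mem : ∀ s : ℝ, c s ∈ Set.Icc t₁ t₂ := fun s =>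
    ⟨le_max_left _ _, max_le ht (min_le_right _ _)⟩
  have hc_eq : ∀ s ∈ Set.Icc t₁ t₂, c s = s := by
    intro s hs
    simp only [hc]
    rw [min_eq_left hs.2, max_eq_right hs.1]
  have hc_cont : Continuous c := continuous_const.max (continuous_id.min continuous_const)
  -- the clamped time-derivative as a jointly continuous function
  set ψ : ℝ → SchwartzMap ℝ ℝ := fun s => ηt (c s) with hψdef
  have hψ : Continuous ψ := hcont.comp_continuous hc_cont hc_mem
  set Φ : ℝ × ℝ → ℝ := fun p => ηt (c p.1) p.2 with hΦdef
  have hΦ : Continuous Φ := by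
    have : Continuous (fun p : SchwartzMap ℝ ℝ × ℝ => p.1 p.2) := by
      have h : Continuous (fun p : (ℝ →ᵇ ℝ) × ℝ => p.1 p.2) := continuous_eval
      have h2 : Continuous (fun p : SchwartzMap ℝ ℝ × ℝ =>
          ((SchwartzMap.toBoundedContinuousFunctionCLM ℝ ℝ ℝ p.1 : ℝ →ᵇ ℝ), p.2)) :=
        ((SchwartzMap.toBoundedContinuousFunctionCLM ℝ ℝ ℝ).continuous.comp
          continuous_fst).prodMk continuous_snd
      exact h.comp h2
    exact this.comp ((hψ.comp continuous_fst).prodMk continuous_snd)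
  -- the solution recovered from its time derivative
  set ζ : ℝ × ℝ → ℝ := fun p => η t₁ p.2 + ∫ u in t₁..p.1, Φ (u, p.2) with hζdef
  have hζcont : Continuous ζ := by
    have h1 : Continuous fun p : ℝ × ℝ => η t₁ p.2 := (η t₁).continuous.comp continuous_snd
    have huncurry : Continuous (Function.uncurry fun (x u : ℝ) => Φ (u, x)) := by
      exact hΦ.comp continuous_swap
    have h2 : Continuous fun p : ℝ × ℝ => ∫ u in t₁..p.2, Φ (u, p.1) :=
      intervalIntegral.continuous_parametric_primitive_of_continuous
        (μ := (volume : Measure ℝ)) (a₀ := t₁) (f := fun (x u : ℝ) => Φ (u, x)) huncurry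
    have h3 := h2.comp (continuous_swap : Continuous (Prod.swap : ℝ × ℝ → ℝ × ℝ))
    have h4 : Continuous fun p : ℝ × ℝ => ∫ u in t₁..p.1, Φ (u, p.2) := by
      exact h3
    exact h1.add h4
  -- `ζ` agrees with `η` on the time interval
  have hζeq : ∀ s ∈ Set.Icc t₁ t₂, ∀ x : ℝ, ζ (s, x) = η s x := by
    intro s hs x
    have hsub : Set.uIcc t₁ s ⊆ Set.Icc t₁ t₂ := by
      rw [Set.uIcc_of_le hs.1]
      exact Set.Icc_subset_Icc le_rfl hs.2
    have hFTC : ∫ u in t₁..s, Φ (u, x) = η s x - η t₁ x := by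
      apply intervalIntegral.integral_eq_sub_of_hasDerivAt
      · intro u hu
        have hu' : u ∈ Set.Icc t₁ t₂ := hsub hu
        have := hderiv u hu' x
        simpa [hΦdef, hc_eq u hu'] using this
      · exact ((hΦ.comp (Continuous.prodMk_left x : Continuous fun u : ℝ =>
          ((u, x) : ℝ × ℝ))).intervalIntegrable t₁ s)
    simp [hζdef, hFTC]
  -- the integrand of the time-derivative of the invariant
  set F : ℝ × ℝ → ℝ := fun p => 2 * ζ p * Φ p with hFdef
  have hFcont : Continuous F := (continuous_const.mul hζcont).mul hΦ
  have hFeq : ∀ s ∈ Set.Icc t₁ t₂, ∀ x : ℝ, F (s, x) = 2 * η s x * ηt s x := by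
    intro s hs x
    simp [hFdef, hζeq s hs x, hΦdef, hc_eq s hs]
  -- fundamental theorem of calculus in time
  have hFTC2 : ∀ x : ℝ, (η t₂ x)^2 - (η t₁ x)^2 = ∫ s in t₁..t₂, F (s, x) := by
    intro x
    have := intervalIntegral.integral_eq_sub_of_hasDerivAt
      (f := fun s => (η s x)^2) (f' := fun s => F (s, x)) (a := t₁) (b := t₂) ?_ ?_
    · exact this.symm
    · intro s hs
      rw [Set.uIcc_of_le ht] at hs
      have h := (hderiv s hs x).pow 2
      have h2 : F (s, x) = 2 * η s x * ηt s x := hFeq s hs x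
      show HasDerivAt (fun s => (η s x)^2) (F (s, x)) s
      rw [h2]
      simpa [pow_one, Pi.pow_def] using h
    · exact ((hFcont.comp (Continuous.prodMk_left x : Continuous fun s : ℝ =>
        ((s, x) : ℝ × ℝ))).intervalIntegrable t₁ t₂)
  -- uniform decay bounds
  obtain ⟨B, hB⟩ : ∃ B : ℝ, ∀ u ∈ Set.Icc t₁ t₂,
      SchwartzMap.seminorm ℝ 0 0 (ηt u) + SchwartzMap.seminorm ℝ 2 0 (ηt u) ≤ B := by
    have hq : Continuous fun f : SchwartzMap ℝ ℝ =>
        SchwartzMap.seminorm ℝ 0 0 f + SchwartzMap.seminorm ℝ 2 0 f := by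
      have h1 := (schwartz_withSeminorms ℝ ℝ ℝ).continuous_seminorm (0, 0)
      have h2 := (schwartz_withSeminorms ℝ ℝ ℝ).continuous_seminorm (2, 0)
      exact h1.add h2
    obtain ⟨C, hC⟩ := isCompact_Icc.exists_bound_of_continuousOn
      (hq.comp_continuousOn hcont)
    exact ⟨C, fun u hu => le_trans (le_abs_self _) (hC u hu)⟩
  have hB0 : 0 ≤ B := le_trans (by positivity) (hB t₁ ⟨le_rfl, ht⟩)
  set A : ℝ := SchwartzMap.seminorm ℝ 0 0 (η t₁) + SchwartzMap.seminorm ℝ 2 0 (η t₁) with hA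
  have hA0 : 0 ≤ A := by positivity
  have hηt_bound : ∀ u ∈ Set.Icc t₁ t₂, ∀ x : ℝ, ‖ηt u x‖ ≤ B * (1 + x ^ 2)⁻¹ := by
    intro u hu x
    refine (schwartz_decay_aux (ηt u) x).trans ?_
    have hx : (0 : ℝ) ≤ (1 + x ^ 2)⁻¹ := by positivity
    exact mul_le_mul_of_nonneg_right (hB u hu) hx
  have hζ_bound : ∀ s ∈ Set.Icc t₁ t₂, ∀ x : ℝ,
      ‖ζ (s, x)‖ ≤ (A + (t₂ - t₁) * B) * (1 + x ^ 2)⁻¹ := by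
    intro s hs x
    have hx : (0 : ℝ) ≤ (1 + x ^ 2)⁻¹ := by positivity
    have h1 : ‖η t₁ x‖ ≤ A * (1 + x ^ 2)⁻¹ := schwartz_decay_aux (η t₁) x
    have h2 : ‖∫ u in t₁..s, Φ (u, x)‖ ≤ B * (1 + x ^ 2)⁻¹ * |s - t₁| := by
      apply intervalIntegral.norm_integral_le_of_norm_le_const
      intro u hu
      have hu' : u ∈ Set.Icc t₁ t₂ := by
        have : Set.uIoc t₁ s ⊆ Set.Icc t₁ t₂ := by
          rw [Set.uIoc_of_le hs.1]
          exact (Set.Ioc_subset_Icc_self).trans (Set.Icc_subset_Icc le_rfl hs.2)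
        exact this hu
      simpa [hΦdef, hc_eq u hu'] using hηt_bound u hu' x
    have h3 : |s - t₁| ≤ t₂ - t₁ := by
      rw [abs_of_nonneg (by linarith [hs.1])]
      linarith [hs.2]
    calc ‖ζ (s, x)‖ ≤ ‖η t₁ x‖ + ‖∫ u in t₁..s, Φ (u, x)‖ := norm_add_le _ _
      _ ≤ A * (1 + x ^ 2)⁻¹ + B * (1 + x ^ 2)⁻¹ * (t₂ - t₁) := by
          refine add_le_add h1 (h2.trans ?_)
          exact mul_le_mul_of_nonneg_left h3 (by positivity)
      _ = (A + (t₂ - t₁) * B) * (1 + x ^ 2)⁻¹ := by ring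
  -- integrability on the product
  have hInt : Integrable (Function.uncurry fun (x s : ℝ) => F (s, x))
      ((volume : Measure ℝ).prod ((volume : Measure ℝ).restrict (Set.Ioc t₁ t₂))) := by
    constructor
    · exact (hFcont.comp (continuous_snd.prodMk continuous_fst)).aestronglyMeasurable
    · have hbound : Integrable
          (fun z : ℝ × ℝ => (2 * B * (A + (t₂ - t₁) * B)) * (1 + z.1 ^ 2)⁻¹ * 1)
          ((volume : Measure ℝ).prod ((volume : Measure ℝ).restrict (Set.Ioc t₁ t₂))) := by
        exact Integrable.mul_prod (integrable_inv_one_add_sq.const_mul _)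
          (integrable_const 1)
      refine hbound.hasFiniteIntegral.mono ?_
      have hrw : (volume : Measure ℝ).prod ((volume : Measure ℝ).restrict (Set.Ioc t₁ t₂))
          = ((volume : Measure ℝ).prod (volume : Measure ℝ)).restrict
            (Set.univ ×ˢ Set.Ioc t₁ t₂) := by
        rw [← Measure.prod_restrict, Measure.restrict_univ]
      rw [hrw]
      rw [ae_restrict_iff' (MeasurableSet.univ.prod measurableSet_Ioc)]
      apply Filter.Eventually.of_forall
      rintro ⟨x, s⟩ ⟨-, hs⟩
      have hs' : s ∈ Set.Icc t₁ t₂ := Set.Ioc_subset_Icc_self hs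
      have hx : (0 : ℝ) ≤ (1 + x ^ 2)⁻¹ := by positivity
      have hx1 : (1 + x ^ 2)⁻¹ ≤ 1 := by
        rw [inv_le_one_iff₀]
        right; nlinarith
      have h1 : ‖ζ (s, x)‖ ≤ (A + (t₂ - t₁) * B) * (1 + x ^ 2)⁻¹ := hζ_bound s hs' x
      have h2 : ‖Φ (s, x)‖ ≤ B := by
        have := hηt_bound s hs' x
        have hΦx : Φ (s, x) = ηt s x := by simp [hΦdef, hc_eq s hs']
        rw [hΦx]
        calc ‖ηt s x‖ ≤ B * (1 + x ^ 2)⁻¹ := this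
          _ ≤ B * 1 := mul_le_mul_of_nonneg_left hx1 hB0
          _ = B := mul_one B
      simp only [Function.uncurry]
      calc ‖F (s, x)‖ = 2 * ‖ζ (s, x)‖ * ‖Φ (s, x)‖ := by
            rw [show F (s, x) = 2 * ζ (s, x) * Φ (s, x) from rfl, norm_mul, norm_mul]
            norm_num
        _ ≤ 2 * ((A + (t₂ - t₁) * B) * (1 + x ^ 2)⁻¹) * B := by
            have hAB : 0 ≤ A + (t₂ - t₁) * B := add_nonneg hA0 (mul_nonneg (by linarith) hB0)
            refine mul_le_mul ?_ h2 (norm_nonneg _)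
              (mul_nonneg (by norm_num) (mul_nonneg hAB hx))
            exact mul_le_mul_of_nonneg_left h1 (by norm_num)
        _ = (2 * B * (A + (t₂ - t₁) * B)) * (1 + x ^ 2)⁻¹ * 1 := by ring
        _ ≤ ‖(2 * B * (A + (t₂ - t₁) * B)) * (1 + x ^ 2)⁻¹ * 1‖ := by
            rw [Real.norm_eq_abs]; exact le_abs_self _
      done
  -- the spatial integral of `F` vanishes at each fixed time
  have hzero : ∀ s ∈ Set.Icc t₁ t₂, ∫ x : ℝ, F (s, x) = 0 := by
    intro s hs
    have h := kdv_flux_integral_zero ε (η s) (ηt s) (hKdV s hs)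
    calc ∫ x : ℝ, F (s, x) = ∫ x : ℝ, 2 * η s x * ηt s x := by
          congr 1; funext x; exact hFeq s hs x
      _ = 0 := h
  -- Fubini
  have hswap := MeasureTheory.integral_integral_swap
    (f := fun (x s : ℝ) => F (s, x)) (μ := (volume : Measure ℝ))
    (ν := (volume : Measure ℝ).restrict (Set.Ioc t₁ t₂)) hInt
  have hRHS : ∫ s in Set.Ioc t₁ t₂, ∫ x : ℝ, F (s, x) = 0 := by
    apply MeasureTheory.setIntegral_eq_zero_of_forall_eq_zero
    intro s hs
    exact hzero s (Set.Ioc_subset_Icc_self hs)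
  have hsq : ∀ t : ℝ, Integrable (fun x : ℝ => (η t x)^2) := by
    intro t
    have := schwartz_mul_integrable (η t) (η t)
    simpa [pow_two] using this
  have key : ∫ x : ℝ, ((η t₂ x)^2 - (η t₁ x)^2) = 0 := by
    calc ∫ x : ℝ, ((η t₂ x)^2 - (η t₁ x)^2)
        = ∫ x : ℝ, ∫ s in t₁..t₂, F (s, x) := by
          congr 1; funext x; exact hFTC2 x
      _ = ∫ x : ℝ, ∫ s in Set.Ioc t₁ t₂, F (s, x) := by
          congr 1; funext x; exact intervalIntegral.integral_of_le ht
      _ = ∫ s in Set.Ioc t₁ t₂, ∫ x : ℝ, F (s, x) := hswap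
      _ = 0 := hRHS
  have hsub := integral_sub (hsq t₂) (hsq t₁)
  rw [key] at hsub
  linarith [hsub.symm]
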